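/- Let u, d ≥ 1 and n ≥ u + d. Let T be a family of subsets of P = {1,…,n} with the following property: for every two repositories on P with K = ∅, C = ∅, at most u unknown dependencies (|U| ≤ u) and at most d defective packages each, if every query in T receives identical feedback under both repositories then the two repositories have the same set of defective packages. Then |T| ≥ C(u+d, d) − 1. -/

import Mathlib

/-- A software repository on package set `Fin n`: known dependencies `K`,
unknown dependencies `U`, conflicts `C` (unordered pairs of distinct packages),
and broken packages `B`. -/
structure Repo (n : ℕ) where
  K : Finset (Fin n × Fin n)
  U : Finset (Fin n × Fin n)
  C : Finset (Sym2 (Fin n))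
  B : Finset (Fin n)
  hC : ∀ s ∈ C, ¬ s.IsDiag

/-- An installation `I` is successful if it avoids broken packages, is closed
under all (known and unknown) dependencies, and contains no conflicting pair. -/
def Successful {n : ℕ} (R : Repo n) (I : Finset (Fin n)) : Prop :=
  Disjoint I R.B ∧
  (∀ e ∈ R.K ∪ R.U, e.1 ∈ I → e.2 ∈ I) ∧
  (∀ s ∈ R.C, ¬ ∀ x ∈ s, x ∈ I)

/-- A package is defective if no successful installation contains it. -/
def Defective {n : ℕ} (R : Repo n) (p : Fin n) : Prop :=
  ∀ I : Finset (Fin n), Successful R I → p ∉ I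

/-- The set of defective packages. -/
def DefSet {n : ℕ} (R : Repo n) : Set (Fin n) := {p | Defective R p}

/-- Two packages weakly conflict if no successful installation contains both. -/
def WeakConflict {n : ℕ} (R : Repo n) (p q : Fin n) : Prop :=
  ∀ I : Finset (Fin n), Successful R I → ¬ (p ∈ I ∧ q ∈ I)

/-- `p` weakly depends on `q` if every successful installation containing `p`
also contains `q`. -/
def WeakDep {n : ℕ} (R : Repo n) (p q : Fin n) : Prop :=
  ∀ I : Finset (Fin n), Successful R I → p ∈ I → q ∈ I

/-- The weakly-conflicting pairs of non-defective packages (each unordered pair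
counted once via `<`). -/
def WeakConflictPairs {n : ℕ} (R : Repo n) : Set (Fin n × Fin n) :=
  {pq | pq.1 < pq.2 ∧ ¬ Defective R pq.1 ∧ ¬ Defective R pq.2 ∧
    WeakConflict R pq.1 pq.2}

/-- `(n,a,b)`-cover-free family. -/
def IsCFF (n a b : ℕ) (T : Finset (Finset (Fin n))) : Prop :=
  ∀ S₁ S₂ : Finset (Fin n), Disjoint S₁ S₂ → S₁.card = a → S₂.card = b →
    ∃ v ∈ T, Disjoint v S₁ ∧ S₂ ⊆ v

/-- The `(≤a, ≤b)`-covering property. -/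
def CoveringLE (n a b : ℕ) (F : Finset (Finset (Fin n))) : Prop :=
  ∀ S₁ S₂ : Finset (Fin n), Disjoint S₁ S₂ → S₁.card ≤ a →
    1 ≤ S₂.card → S₂.card ≤ b → ∃ v ∈ F, Disjoint v S₁ ∧ S₂ ⊆ v

/-- The digraph of known dependencies is acyclic. -/
def Acyclic {n : ℕ} (K : Finset (Fin n × Fin n)) : Prop :=
  ∀ p : Fin n, ¬ Relation.TransGen (fun x y => (x, y) ∈ K) p p

open Classical in
/-- The `K`-closure of `v`: everything reachable from `v` along `K`-edges. -/
noncomputable def kclosure {n : ℕ} (K : Finset (Fin n × Fin n))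
    (v : Finset (Fin n)) : Finset (Fin n) :=
  Finset.univ.filter
    (fun p => ∃ q ∈ v, Relation.ReflTransGen (fun x y => (x, y) ∈ K) q p)

/-- `Sset R T p`: the queries of `T` that are successful installations
containing `p`. -/
def Sset {n : ℕ} (R : Repo n) (T : Finset (Finset (Fin n))) (p : Fin n) :
    Set (Finset (Fin n)) :=
  {t | t ∈ T ∧ Successful R t ∧ p ∈ t}



section LowerBoundAux

open Classical

variable {n u : ℕ}

/-- Unknown-dependency edges forming a directed cycle on `E`. -/
noncomputable def cycU (E : Finset (Fin n)) (hE : E.card = u + 1) :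
    Finset (Fin n × Fin n) :=
  (Finset.univ : Finset (Fin (u + 1))).image
    (fun i => ((E.orderIsoOfFin hE i : Fin n), (E.orderIsoOfFin hE (i + 1) : Fin n)))

lemma cycU_card_le (E : Finset (Fin n)) (hE : E.card = u + 1) :
    (cycU E hE).card ≤ u + 1 := by
  calc (cycU E hE).card ≤ (Finset.univ : Finset (Fin (u + 1))).card :=
        Finset.card_image_le
    _ = u + 1 := by simp

/-- The repo with the cycle on `E` as unknown dependencies and broken set `B`. -/
noncomputable def cycRepo (E B : Finset (Fin n)) (hE : E.card = u + 1) : Repo n :=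
  ⟨∅, cycU E hE, ∅, B, by simp⟩

open Fin.NatCast Fin.CommRing in
lemma cyc_closed_all (E : Finset (Fin n)) (hE : E.card = u + 1)
    (t : Finset (Fin n))
    (hcl : ∀ e ∈ cycU E hE, e.1 ∈ t → e.2 ∈ t)
    {x : Fin n} (hx : x ∈ E) (hxt : x ∈ t) : E ⊆ t := by
  set σ := E.orderIsoOfFin hE with hσ
  have step : ∀ i : Fin (u + 1), (σ i : Fin n) ∈ t → (σ (i + 1) : Fin n) ∈ t := by
    intro i hi
    exact hcl ((σ i : Fin n), (σ (i + 1) : Fin n))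
      (Finset.mem_image.mpr ⟨i, Finset.mem_univ i, rfl⟩) hi
  set i₀ := σ.symm ⟨x, hx⟩ with hi₀
  have key : ∀ k : ℕ, (σ (i₀ + (k : Fin (u + 1))) : Fin n) ∈ t := by
    intro k
    induction k with
    | zero =>
        have : σ i₀ = ⟨x, hx⟩ := σ.apply_symm_apply ⟨x, hx⟩
        simpa [this] using hxt
    | succ k ih =>
        have h1 : i₀ + ((k + 1 : ℕ) : Fin (u + 1)) = (i₀ + (k : ℕ)) + 1 := by
          push_cast
          ring
        rw [h1]
        exact step _ ih
  intro y hy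
  set j := σ.symm ⟨y, hy⟩ with hj
  have h2 : i₀ + (((j - i₀ : Fin (u + 1)).val : ℕ) : Fin (u + 1)) = j := by
    rw [Fin.cast_val_eq_self, add_comm i₀ (j - i₀)]
    exact sub_add_cancel j i₀
  have := key ((j - i₀ : Fin (u + 1)).val)
  rw [h2] at this
  have h3 : σ j = ⟨y, hy⟩ := σ.apply_symm_apply ⟨y, hy⟩
  rw [h3] at this
  exact this

lemma cyc_successful_iff (E B : Finset (Fin n)) (hE : E.card = u + 1)
    (t : Finset (Fin n)) :
    Successful (cycRepo E B hE) t ↔ Disjoint t B ∧ (Disjoint t E ∨ E ⊆ t) := by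
  constructor
  · rintro ⟨hB, hcl, -⟩
    refine ⟨hB, ?_⟩
    by_cases h : Disjoint t E
    · exact Or.inl h
    · right
      obtain ⟨x, hxt, hxE⟩ := Finset.not_disjoint_iff.mp h
      have hcl' : ∀ e ∈ cycU E hE, e.1 ∈ t → e.2 ∈ t := by
        intro e he
        exact hcl e (by simpa [cycRepo] using he)
      exact cyc_closed_all E hE t hcl' hxE hxt
  · rintro ⟨hB, hor⟩
    refine ⟨hB, ?_, by simp [cycRepo]⟩
    intro e he h1
    have he' : e ∈ cycU E hE := by simpa [cycRepo] using he
    obtain ⟨i, -, hi⟩ := Finset.mem_image.mp he'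
    rcases hor with hdis | hsub
    · exfalso
      have : e.1 ∈ E := by
        rw [← hi]
        exact (E.orderIsoOfFin hE i).2
      exact (Finset.disjoint_left.mp hdis h1) this
    · have : e.2 ∈ E := by
        rw [← hi]
        exact (E.orderIsoOfFin hE (i + 1)).2
      exact hsub this

lemma cyc_defSet (A E : Finset (Fin n)) (hEA : E ⊆ A) (hE : E.card = u + 1) :
    DefSet (cycRepo E (A \ E) hE) = ↑(A \ E) := by
  ext p
  simp only [DefSet, Defective, Set.mem_setOf_eq, Finset.coe_sdiff, Set.mem_diff,
    Finset.mem_coe]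
  constructor
  · intro hdef
    by_contra hp
    have hp' : p ∉ A \ E := by
      intro h
      exact hp ⟨(Finset.mem_sdiff.mp h).1, (Finset.mem_sdiff.mp h).2⟩
    by_cases hpE : p ∈ E
    · refine hdef E ?_ hpE
      rw [cyc_successful_iff]
      exact ⟨Finset.disjoint_sdiff, Or.inr (Finset.Subset.refl E)⟩
    · have hpA : p ∉ A := by
        intro h
        exact hp' (Finset.mem_sdiff.mpr ⟨h, hpE⟩)
      refine hdef {p} ?_ (Finset.mem_singleton_self p)
      rw [cyc_successful_iff]
      exact ⟨Finset.disjoint_singleton_left.mpr hp',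
        Or.inl (Finset.disjoint_singleton_left.mpr hpE)⟩
  · intro hp I hI hpI
    have hd : Disjoint I (A \ E) := hI.1
    exact (Finset.disjoint_left.mp hd hpI) (Finset.mem_sdiff.mpr ⟨hp.1, hp.2⟩)

lemma cyc_successful_iff' (A E B : Finset (Fin n)) (hEA : E ⊆ A)
    (hE : E.card = u + 1) (hB : B = A \ E) (t : Finset (Fin n)) :
    Successful (cycRepo E B hE) t ↔ (t ∩ A = ∅ ∨ t ∩ A = E) := by
  subst hB
  rw [cyc_successful_iff]
  constructor
  · rintro ⟨hdB, hor⟩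
    have hsub : t ∩ A ⊆ E := by
      intro x hx
      obtain ⟨hxt, hxA⟩ := Finset.mem_inter.mp hx
      by_contra hxE
      exact (Finset.disjoint_left.mp hdB hxt) (Finset.mem_sdiff.mpr ⟨hxA, hxE⟩)
    rcases hor with hdis | hEt
    · left
      apply Finset.eq_empty_of_forall_notMem
      intro x hx
      exact (Finset.disjoint_left.mp hdis (Finset.mem_inter.mp hx).1) (hsub hx)
    · right
      apply Finset.Subset.antisymm hsub
      intro x hx
      exact Finset.mem_inter.mpr ⟨hEt hx, hEA hx⟩
  · intro h
    have hdB : Disjoint t (A \ E) := by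
      rw [Finset.disjoint_left]
      intro x hxt hxs
      obtain ⟨hxA, hxE⟩ := Finset.mem_sdiff.mp hxs
      have hxI : x ∈ t ∩ A := Finset.mem_inter.mpr ⟨hxt, hxA⟩
      rcases h with h | h
      · rw [h] at hxI
        exact absurd hxI (Finset.notMem_empty x)
      · rw [h] at hxI
        exact hxE hxI
    refine ⟨hdB, ?_⟩
    rcases h with h | h
    · left
      rw [Finset.disjoint_left]
      intro x hxt hxE
      have : x ∈ t ∩ A := Finset.mem_inter.mpr ⟨hxt, hEA hxE⟩
      rw [h] at this
      exact absurd this (Finset.notMem_empty x)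
    · right
      intro x hxE
      have : x ∈ t ∩ A := by
        rw [h]
        exact hxE
      exact (Finset.mem_inter.mp this).1

end LowerBoundAux

/-- Adaptive-style counting lower bound: any query family solving Maximal
Sub-repository with at most `u` unknown dependencies and at most `d` defects
must have at least `C(u+d, d) - 1` queries. -/
theorem adaptive_maximal_subrepo_lower_bound (n u d : ℕ)
    (hu : 1 ≤ u) (hd : 1 ≤ d) (hn : u + d ≤ n)
    (T : Finset (Finset (Fin n)))
    (hT : ∀ R₁ R₂ : Repo n,
      R₁.K = ∅ → R₂.K = ∅ → R₁.C = ∅ → R₂.C = ∅ →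
      R₁.U.card ≤ u → R₂.U.card ≤ u →
      (DefSet R₁).ncard ≤ d → (DefSet R₂).ncard ≤ d →
      (∀ t ∈ T, Successful R₁ t ↔ Successful R₂ t) →
      DefSet R₁ = DefSet R₂) :
    (u + d).choose d - 1 ≤ T.card := by
  classical
  obtain ⟨u', rfl⟩ : ∃ u', u = u' + 1 := ⟨u - 1, by omega⟩
  set A : Finset (Fin n) :=
    (Finset.univ : Finset (Fin (u' + 1 + d))).map (Fin.castLEEmb hn) with hAdef
  have hA : A.card = u' + 1 + d := by simp [hAdef]
  set 𝒰 := A.powersetCard (u' + 1) with h𝒰def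
  have h𝒰card : 𝒰.card = (u' + 1 + d).choose (u' + 1) := by
    rw [h𝒰def, Finset.card_powersetCard, hA]
  set P : Finset (Fin n) → Prop := fun E => ∃ t ∈ T, t ∩ A = E with hPdef
  -- at most one E ∈ 𝒰 fails P
  have hbad : (𝒰.filter (fun E => ¬ P E)).card ≤ 1 := by
    rw [Finset.card_le_one]
    intro E₁ h₁ E₂ h₂
    obtain ⟨hE₁, hP₁⟩ := Finset.mem_filter.mp h₁
    obtain ⟨hE₂, hP₂⟩ := Finset.mem_filter.mp h₂
    obtain ⟨hE₁A, hE₁c⟩ := Finset.mem_powersetCard.mp hE₁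
    obtain ⟨hE₂A, hE₂c⟩ := Finset.mem_powersetCard.mp hE₂
    have hdef := hT (cycRepo E₁ (A \ E₁) hE₁c) (cycRepo E₂ (A \ E₂) hE₂c)
      rfl rfl rfl rfl (cycU_card_le E₁ hE₁c) (cycU_card_le E₂ hE₂c)
      (by
        rw [cyc_defSet A E₁ hE₁A hE₁c, Set.ncard_coe_finset,
          Finset.card_sdiff_of_subset hE₁A, hA, hE₁c]
        omega)
      (by
        rw [cyc_defSet A E₂ hE₂A hE₂c, Set.ncard_coe_finset,
          Finset.card_sdiff_of_subset hE₂A, hA, hE₂c]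
        omega)
      (by
        intro t ht
        rw [cyc_successful_iff' A E₁ (A \ E₁) hE₁A hE₁c rfl t,
          cyc_successful_iff' A E₂ (A \ E₂) hE₂A hE₂c rfl t]
        have hne₁ : t ∩ A ≠ E₁ := fun h => hP₁ ⟨t, ht, h⟩
        have hne₂ : t ∩ A ≠ E₂ := fun h => hP₂ ⟨t, ht, h⟩
        constructor
        · rintro (h | h)
          · exact Or.inl h
          · exact absurd h hne₁
        · rintro (h | h)
          · exact Or.inl h
          · exact absurd h hne₂)
    rw [cyc_defSet A E₁ hE₁A hE₁c, cyc_defSet A E₂ hE₂A hE₂c] at hdef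
    have hsd : A \ E₁ = A \ E₂ := Finset.coe_injective hdef
    have h₁' : A \ (A \ E₁) = E₁ := by
      rw [Finset.sdiff_sdiff_self_left, Finset.inter_eq_right.mpr hE₁A]
    have h₂' : A \ (A \ E₂) = E₂ := by
      rw [Finset.sdiff_sdiff_self_left, Finset.inter_eq_right.mpr hE₂A]
    rw [← h₁', ← h₂', hsd]
  -- the good E's inject into T
  have hgood : (𝒰.filter P).card ≤ T.card := by
    have hsub : 𝒰.filter P ⊆ T.image (fun t => t ∩ A) := by
      intro E hE
      obtain ⟨-, t, ht, hEt⟩ := Finset.mem_filter.mp hE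
      exact Finset.mem_image.mpr ⟨t, ht, hEt⟩
    calc (𝒰.filter P).card ≤ (T.image (fun t => t ∩ A)).card :=
          Finset.card_le_card hsub
      _ ≤ T.card := Finset.card_image_le
  have hsplit := Finset.card_filter_add_card_filter_not (s := 𝒰) P
  have hsymm : (u' + 1 + d).choose d = (u' + 1 + d).choose (u' + 1) := by
    have := Nat.choose_symm (n := u' + 1 + d) (k := d) (by omega)
    have h4 : u' + 1 + d - d = u' + 1 := by omega
    rw [h4] at this
    exact this.symm
  rw [hsymm]
  omega
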